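/- For every λ > 0, the class G_λ of λ-quasi-geometrically infinitely divisible distributions on [0,∞) is closed under convergence in distribution: if X_n are R₊-valued with λ-q.g.i.d. distributions and X_n converges in distribution to X, then the distribution of X is λ-q.g.i.d. -/

import Mathlib

open MeasureTheory Real Set

noncomputable section

/-- Convolution of two pmfs on ℕ. -/
def seqConv (f g : ℕ → ℝ) : ℕ → ℝ := fun n => ∑ k ∈ Finset.range (n + 1), f k * g (n - k)

/-- k-fold convolution power of a pmf on ℕ. -/
def seqConvPow (f : ℕ → ℝ) : ℕ → ℕ → ℝ
  | 0 => fun n => if n = 0 then 1 else 0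
  | k + 1 => seqConv f (seqConvPow f k)

/-- `f` is a probability mass function on ℕ. -/
def IsPMF (f : ℕ → ℝ) : Prop := (∀ n, 0 ≤ f n) ∧ ∑' n, f n = 1

/-- pmf of a geometric(p) random sum `X₁ + ⋯ + X_{N_p}` (N_p ≥ 1) of iid variables with pmf f. -/
def geomCompound (p : ℝ) (f : ℕ → ℝ) : ℕ → ℝ :=
  fun n => ∑' k : ℕ, p * (1 - p) ^ k * seqConvPow f (k + 1) n

/-- A distribution on ℕ is geometrically infinitely divisible. -/
def GID (q : ℕ → ℝ) : Prop :=
  ∀ p ∈ Set.Ioo (0 : ℝ) 1, ∃ f : ℕ → ℝ, IsPMF f ∧ ∀ n, q n = geomCompound p f n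

/-- Convolution of measures on ℝ (distribution of the sum of independent rv's). -/
def mconv (μ ν : Measure ℝ) : Measure ℝ :=
  Measure.map (fun x : ℝ × ℝ => x.1 + x.2) (μ.prod ν)

/-- k-fold convolution power of a measure on ℝ. -/
def mpow (μ : Measure ℝ) : ℕ → Measure ℝ
  | 0 => Measure.dirac 0
  | k + 1 => mconv μ (mpow μ k)

/-- A distribution on [0,∞) is geometrically infinitely divisible: for every p ∈ (0,1)
it is the distribution of a geometric(p) random sum of iid nonnegative rv's. -/
def GIDM (μ : Measure ℝ) : Prop :=
  ∀ p ∈ Set.Ioo (0 : ℝ) 1, ∃ ν : Measure ℝ, IsProbabilityMeasure ν ∧ ν (Set.Iio 0) = 0 ∧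
    μ = Measure.sum (fun k : ℕ => (ENNReal.ofReal (p * (1 - p) ^ k)) • mpow ν (k + 1))

/-- Laplace–Stieltjes transform of a measure on ℝ. -/
def lst (μ : Measure ℝ) (u : ℝ) : ℝ := ∫ x, Real.exp (-(u * x)) ∂μ

/-- pmf of the λ-Poisson mixture with mixing distribution μ. -/
def pmix (l : ℝ) (μ : Measure ℝ) (n : ℕ) : ℝ :=
  ∫ x, (l * x) ^ n * Real.exp (-(l * x)) / (n.factorial : ℝ) ∂μ

/-- μ is λ-quasi-geometrically infinitely divisible: its λ-Poisson mixture is g.i.d. -/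
def QGID (l : ℝ) (μ : Measure ℝ) : Prop := GID (pmix l μ)

/-- K(τ) = -φ'(τ)/φ(τ)² where φ is the LST of μ. -/
def Kfun (μ : Measure ℝ) (τ : ℝ) : ℝ := -(deriv (lst μ) τ) / (lst μ τ) ^ 2

/-- G is a probability generating function (on |z| ≤ 1). -/
def IsPGF (G : ℝ → ℝ) : Prop :=
  ∃ f : ℕ → ℝ, IsPMF f ∧ ∀ z : ℝ, |z| ≤ 1 → G z = ∑' n, f n * z ^ n

end


noncomputable section Aux

open Filter

private lemma norm_eq_self_of_nonneg {f : ℕ → ℝ} (hf : ∀ n, 0 ≤ f n) :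
    (fun n => ‖f n‖) = f := funext fun n => Real.norm_of_nonneg (hf n)

private lemma isPMF_summable {f : ℕ → ℝ} (hf : IsPMF f) : Summable f := by
  by_contra h
  have h2 := hf.2
  rw [tsum_eq_zero_of_not_summable h] at h2
  exact one_ne_zero h2.symm

private lemma seqConv_nonneg {f g : ℕ → ℝ} (hf : ∀ n, 0 ≤ f n) (hg : ∀ n, 0 ≤ g n) (n : ℕ) :
    0 ≤ seqConv f g n :=
  Finset.sum_nonneg fun k _ => mul_nonneg (hf k) (hg _)

private lemma summable_seqConv {f g : ℕ → ℝ} (hf0 : ∀ n, 0 ≤ f n) (hg0 : ∀ n, 0 ≤ g n)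
    (hf : Summable f) (hg : Summable g) : Summable (seqConv f g) :=
  summable_sum_mul_range_of_summable_norm'
    (by rw [norm_eq_self_of_nonneg hf0]; exact hf) hf
    (by rw [norm_eq_self_of_nonneg hg0]; exact hg) hg

private lemma tsum_seqConv {f g : ℕ → ℝ} (hf0 : ∀ n, 0 ≤ f n) (hg0 : ∀ n, 0 ≤ g n)
    (hf : Summable f) (hg : Summable g) :
    ∑' n, seqConv f g n = (∑' n, f n) * (∑' n, g n) := by
  rw [tsum_mul_tsum_eq_tsum_sum_range_of_summable_norm
    (by rw [norm_eq_self_of_nonneg hf0]; exact hf)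
    (by rw [norm_eq_self_of_nonneg hg0]; exact hg)]
  rfl

private lemma seqConvPow_nonneg {f : ℕ → ℝ} (hf : ∀ n, 0 ≤ f n) :
    ∀ k n, 0 ≤ seqConvPow f k n
  | 0, n => by unfold seqConvPow; split <;> norm_num
  | k + 1, n => seqConv_nonneg hf (seqConvPow_nonneg hf k) n

private lemma hasSum_seqConvPow {f : ℕ → ℝ} (hf0 : ∀ n, 0 ≤ f n) (hf : Summable f) :
    ∀ k, Summable (seqConvPow f k) ∧ ∑' n, seqConvPow f k n = (∑' n, f n) ^ k
  | 0 => by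
    have h : HasSum (seqConvPow f 0) 1 := hasSum_ite_eq 0 1
    exact ⟨h.summable, by rw [h.tsum_eq, pow_zero]⟩
  | k + 1 => by
    obtain ⟨hsum, htsum⟩ := hasSum_seqConvPow hf0 hf k
    have h0 := seqConvPow_nonneg hf0 k
    refine ⟨summable_seqConv hf0 h0 hf hsum, ?_⟩
    show ∑' n, seqConv f (seqConvPow f k) n = _
    rw [tsum_seqConv hf0 h0 hf hsum, htsum, pow_succ]
    ring

private lemma seqConvPow_le_one {f : ℕ → ℝ} (hf0 : ∀ n, 0 ≤ f n) (hf : Summable f)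
    (hs : ∑' n, f n ≤ 1) (k n : ℕ) : seqConvPow f k n ≤ 1 := by
  obtain ⟨hsum, htsum⟩ := hasSum_seqConvPow hf0 hf k
  calc seqConvPow f k n ≤ ∑' m, seqConvPow f k m :=
        Summable.le_tsum hsum n fun j _ => seqConvPow_nonneg hf0 k j
    _ = (∑' n, f n) ^ k := htsum
    _ ≤ 1 := pow_le_one₀ (tsum_nonneg hf0) hs

private lemma summable_geomTerm {p : ℝ} (hp : p ∈ Set.Ioo (0 : ℝ) 1) {f : ℕ → ℝ}
    (hf0 : ∀ n, 0 ≤ f n) (hf : Summable f) (hs : ∑' n, f n ≤ 1) (n : ℕ) :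
    Summable (fun k => p * (1 - p) ^ k * seqConvPow f (k + 1) n) := by
  have hgeo : Summable (fun k : ℕ => p * (1 - p) ^ k) :=
    (summable_geometric_of_lt_one (by linarith [hp.2]) (by linarith [hp.1])).mul_left p
  refine hgeo.of_nonneg_of_le (fun k => ?_) (fun k => ?_)
  · exact mul_nonneg (mul_nonneg hp.1.le (pow_nonneg (by linarith [hp.2]) k))
      (seqConvPow_nonneg hf0 _ _)
  · exact mul_le_of_le_one_right
      (mul_nonneg hp.1.le (pow_nonneg (by linarith [hp.2]) k))
      (seqConvPow_le_one hf0 hf hs _ _)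

private lemma geom_denom_pos {p : ℝ} (hp : p ∈ Set.Ioo (0 : ℝ) 1) {s : ℝ}
    (hs0 : 0 ≤ s) (hs : s ≤ 1) : 0 < 1 - (1 - p) * s := by
  nlinarith [hp.1, hp.2]

private lemma tsum_geomCompound {p : ℝ} (hp : p ∈ Set.Ioo (0 : ℝ) 1) {f : ℕ → ℝ}
    (hf0 : ∀ n, 0 ≤ f n) (hf : Summable f) (hs : ∑' n, f n ≤ 1) :
    ∑' n, geomCompound p f n
      = p * (∑' n, f n) * (1 - (1 - p) * ∑' n, f n)⁻¹ := by
  set s := ∑' n, f n with hsdef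
  have hs0 : 0 ≤ s := tsum_nonneg hf0
  have h1p : (0:ℝ) ≤ 1 - p := by linarith [hp.2]
  have hlt : (1 - p) * s < 1 := lt_of_le_of_lt
    (by nlinarith [hp.1] : (1 - p) * s ≤ 1 - p) (by linarith [hp.1])
  have hnn : ∀ k n : ℕ, 0 ≤ p * (1 - p) ^ k * seqConvPow f (k + 1) n := fun k n =>
    mul_nonneg (mul_nonneg hp.1.le (pow_nonneg h1p k)) (seqConvPow_nonneg hf0 _ _)
  have hinner : ∀ k : ℕ,
      ∑' n, p * (1 - p) ^ k * seqConvPow f (k + 1) n = p * s * ((1 - p) * s) ^ k := by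
    intro k
    rw [tsum_mul_left, (hasSum_seqConvPow hf0 hf (k + 1)).2, ← hsdef, mul_pow]
    ring
  have hksum : Summable (fun k : ℕ => p * s * ((1 - p) * s) ^ k) :=
    (summable_geometric_of_lt_one (mul_nonneg h1p hs0) hlt).mul_left _
  have hF : Summable (fun z : ℕ × ℕ => p * (1 - p) ^ z.1 * seqConvPow f (z.1 + 1) z.2) := by
    have hnn' : (0 : ℕ × ℕ → ℝ) ≤ fun z => p * (1 - p) ^ z.1 * seqConvPow f (z.1 + 1) z.2 :=
      fun z => hnn z.1 z.2
    refine (summable_prod_of_nonneg hnn').mpr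
      ⟨fun k => Summable.congr
        ((hasSum_seqConvPow hf0 hf (k + 1)).1.mul_left (p * (1 - p) ^ k)) (fun n => rfl), ?_⟩
    apply hksum.congr
    intro k
    exact (hinner k).symm
  have hswap : ∑' n, ∑' k, p * (1 - p) ^ k * seqConvPow f (k + 1) n
      = ∑' k, ∑' n, p * (1 - p) ^ k * seqConvPow f (k + 1) n :=
    Summable.tsum_comm' hF (fun k => (hasSum_seqConvPow hf0 hf (k + 1)).1.mul_left (p * (1 - p) ^ k))
      (fun n => summable_geomTerm hp hf0 hf hs n)
  calc ∑' n, geomCompound p f n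
      = ∑' k, ∑' n, p * (1 - p) ^ k * seqConvPow f (k + 1) n := hswap
    _ = ∑' k, p * s * ((1 - p) * s) ^ k := tsum_congr hinner
    _ = p * s * (1 - (1 - p) * s)⁻¹ := by
        rw [tsum_mul_left, tsum_geometric_of_lt_one (mul_nonneg h1p hs0) hlt]

private lemma tsum_eq_one_of_geomCompound {p : ℝ} (hp : p ∈ Set.Ioo (0 : ℝ) 1) {f : ℕ → ℝ}
    (hf0 : ∀ n, 0 ≤ f n) (hf : Summable f) (hs : ∑' n, f n ≤ 1)
    (hq : ∑' n, geomCompound p f n = 1) : ∑' n, f n = 1 := by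
  set s := ∑' n, f n
  have hs0 : 0 ≤ s := tsum_nonneg hf0
  have hd : 0 < 1 - (1 - p) * s := geom_denom_pos hp hs0 hs
  rw [tsum_geomCompound hp hf0 hf hs] at hq
  have h2 : p * s = 1 - (1 - p) * s := by
    have := congrArg (· * (1 - (1 - p) * s)) hq
    change p * s * (1 - (1 - p) * s)⁻¹ * (1 - (1 - p) * s) = 1 * (1 - (1 - p) * s) at this
    simpa [mul_assoc, inv_mul_cancel₀ hd.ne'] using this
  nlinarith [hp.1]

private lemma tendsto_seqConvPow {F : ℕ → ℕ → ℝ} {f : ℕ → ℝ}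
    (h : ∀ n, Tendsto (fun j => F j n) atTop (nhds (f n))) :
    ∀ (k n : ℕ), Tendsto (fun j => seqConvPow (F j) k n) atTop (nhds (seqConvPow f k n))
  | 0, n => by
    unfold seqConvPow
    exact tendsto_const_nhds
  | k + 1, n => by
    show Tendsto (fun j => seqConv (F j) (seqConvPow (F j) k) n) atTop
      (nhds (seqConv f (seqConvPow f k) n))
    unfold seqConv
    exact tendsto_finset_sum _ fun i _ => (h i).mul (tendsto_seqConvPow h k (n - i))

private lemma tendsto_geomCompound {p : ℝ} (hp : p ∈ Set.Ioo (0 : ℝ) 1)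
    {F : ℕ → ℕ → ℝ} {f : ℕ → ℝ} (hF : ∀ j, IsPMF (F j))
    (h : ∀ n, Tendsto (fun j => F j n) atTop (nhds (f n))) (n : ℕ) :
    Tendsto (fun j => geomCompound p (F j) n) atTop (nhds (geomCompound p f n)) := by
  have h1p : (0:ℝ) ≤ 1 - p := by linarith [hp.2]
  have hbd : Summable (fun k : ℕ => p * (1 - p) ^ k) :=
    (summable_geometric_of_lt_one h1p (by linarith [hp.1])).mul_left p
  have hb : ∀ j k : ℕ, ‖p * (1 - p) ^ k * seqConvPow (F j) (k + 1) n‖ ≤ p * (1 - p) ^ k := by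
    intro j k
    have hnn : 0 ≤ seqConvPow (F j) (k + 1) n := seqConvPow_nonneg (hF j).1 _ _
    have hle : seqConvPow (F j) (k + 1) n ≤ 1 :=
      seqConvPow_le_one (hF j).1 (isPMF_summable (hF j)) (hF j).2.le _ _
    rw [Real.norm_of_nonneg (mul_nonneg (mul_nonneg hp.1.le (pow_nonneg h1p k)) hnn)]
    exact mul_le_of_le_one_right (mul_nonneg hp.1.le (pow_nonneg h1p k)) hle
  simp only [geomCompound]
  exact tendsto_tsum_of_dominated_convergence hbd
    (fun k => Tendsto.const_mul _ (tendsto_seqConvPow h (k + 1) n))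
    (Eventually.of_forall fun j => hb j)

private lemma poisson_hasSum (t : ℝ) :
    HasSum (fun n : ℕ => t ^ n * Real.exp (-t) / n.factorial) 1 := by
  have h : HasSum (fun n : ℕ => t ^ n / n.factorial) (Real.exp t) := by
    rw [Real.exp_eq_exp_ℝ]
    exact NormedSpace.expSeries_div_hasSum_exp t
  have h2 : (fun n : ℕ => t ^ n * Real.exp (-t) / n.factorial)
      = fun n : ℕ => t ^ n / n.factorial * Real.exp (-t) := by
    funext n; ring
  rw [h2, show (1:ℝ) = Real.exp t * Real.exp (-t) by rw [← Real.exp_add]; simp]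
  exact h.mul_right _

private lemma ae_nonneg_of_supp {μ : Measure ℝ} (hsupp : μ (Set.Iio 0) = 0) :
    ∀ᵐ x ∂μ, (0:ℝ) ≤ x := by
  rw [ae_iff]
  convert hsupp using 2
  ext x
  simp [Set.mem_Iio, not_le]

private lemma pmix_nonneg {l : ℝ} (hl : 0 < l) {μ : Measure ℝ}
    (hsupp : μ (Set.Iio 0) = 0) (n : ℕ) : 0 ≤ pmix l μ n := by
  refine integral_nonneg_of_ae ((ae_nonneg_of_supp hsupp).mono fun x hx => ?_)
  have h1 : 0 ≤ l * x := mul_nonneg hl.le hx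
  positivity

private lemma tsum_pmix {l : ℝ} {μ : Measure ℝ} [IsProbabilityMeasure μ]
    (hl : 0 < l) (hsupp : μ (Set.Iio 0) = 0) : ∑' n, pmix l μ n = 1 := by
  set h : ℕ → ℝ → ℝ := fun n x => (l * x) ^ n * Real.exp (-(l * x)) / n.factorial with hdef
  have hcont : ∀ n, Continuous (h n) := by
    intro n
    apply Continuous.div_const
    exact ((continuous_const.mul continuous_id).pow n).mul
      ((continuous_const.mul continuous_id).neg.rexp)
  have hmeas : ∀ n, AEStronglyMeasurable (h n) μ := fun n => (hcont n).aestronglyMeasurable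
  have hsum1 : ∀ x : ℝ, HasSum (fun n => h n x) 1 := fun x => poisson_hasSum (l * x)
  have hae := ae_nonneg_of_supp hsupp
  have key : ∑' n, ∫⁻ x, ‖h n x‖ₑ ∂μ = 1 := by
    rw [← lintegral_tsum (fun n => (hmeas n).enorm)]
    have h1 : ∀ᵐ x ∂μ, ∑' n, (‖h n x‖ₑ : ENNReal) = 1 := by
      refine hae.mono fun x hx => ?_
      have hnn : ∀ n, 0 ≤ h n x := by
        intro n
        have h1 : 0 ≤ l * x := mul_nonneg hl.le hx
        simp only [hdef]
        positivity
      calc ∑' n, (‖h n x‖ₑ : ENNReal) = ∑' n, ENNReal.ofReal (h n x) :=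
            tsum_congr fun n => Real.enorm_eq_ofReal (hnn n)
        _ = ENNReal.ofReal (∑' n, h n x) :=
            (ENNReal.ofReal_tsum_of_nonneg hnn (hsum1 x).summable).symm
        _ = 1 := by rw [(hsum1 x).tsum_eq, ENNReal.ofReal_one]
    rw [lintegral_congr_ae h1, lintegral_one, measure_univ]
  have hint := integral_tsum hmeas (by rw [key]; exact ENNReal.one_ne_top)
  have hfin : (fun x => ∑' n, h n x) = fun _ : ℝ => (1:ℝ) :=
    funext fun x => (hsum1 x).tsum_eq
  have : ∑' n, pmix l μ n = ∫ x, ∑' n, h n x ∂μ := hint.symm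
  rw [this, hfin, integral_const]
  simp

private lemma poisson_term_mem_Icc {t : ℝ} (ht : 0 ≤ t) (n : ℕ) :
    t ^ n * Real.exp (-t) / n.factorial ∈ Set.Icc (0:ℝ) 1 := by
  constructor
  · positivity
  · have h1 : t ^ n / n.factorial ≤ Real.exp t := Real.pow_div_factorial_le_exp t ht n
    have h2 : (0:ℝ) < Real.exp (-t) := Real.exp_pos _
    calc t ^ n * Real.exp (-t) / n.factorial
        = t ^ n / n.factorial * Real.exp (-t) := by ring
      _ ≤ Real.exp t * Real.exp (-t) := by
          exact mul_le_mul_of_nonneg_right h1 h2.le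
      _ = 1 := by rw [← Real.exp_add]; simp

/-- The Poisson weight, truncated to be a bounded continuous function on all of ℝ. -/
private def poissonBCF (l : ℝ) (hl : 0 ≤ l) (n : ℕ) : BoundedContinuousFunction ℝ ℝ where
  toFun := fun x => (l * max x 0) ^ n * Real.exp (-(l * max x 0)) / n.factorial
  continuous_toFun := by
    apply Continuous.div_const
    exact ((continuous_const.mul (continuous_id.max continuous_const)).pow n).mul
      ((continuous_const.mul (continuous_id.max continuous_const)).neg.rexp)
  map_bounded' := by
    refine ⟨2, fun x y => ?_⟩
    have hx := poisson_term_mem_Icc (mul_nonneg hl (le_max_right x 0)) n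
    have hy := poisson_term_mem_Icc (mul_nonneg hl (le_max_right y 0)) n
    rw [Real.dist_eq, abs_sub_le_iff]
    constructor <;> linarith [hx.1, hx.2, hy.1, hy.2]

private lemma pmix_eq_integral_bcf {l : ℝ} (hl : 0 < l) {μ : Measure ℝ}
    (hsupp : μ (Set.Iio 0) = 0) (n : ℕ) :
    pmix l μ n = ∫ x, poissonBCF l hl.le n x ∂μ := by
  refine integral_congr_ae ((ae_nonneg_of_supp hsupp).mono fun x hx => ?_)
  have h1 : poissonBCF l hl.le n x
      = (l * max x 0) ^ n * Real.exp (-(l * max x 0)) / n.factorial := rfl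
  rw [h1, max_eq_left hx]

end Aux

/-- For every λ > 0 the class of λ-q.g.i.d. distributions on [0,∞) is
closed under convergence in distribution. -/
theorem stmt11 (l : ℝ) (hl : 0 < l) (μs : ℕ → Measure ℝ) (μ : Measure ℝ)
    [∀ n, IsProbabilityMeasure (μs n)] [IsProbabilityMeasure μ]
    (hsupp : ∀ n, (μs n) (Set.Iio 0) = 0) (hsupp' : μ (Set.Iio 0) = 0)
    (hqgid : ∀ n, QGID l (μs n))
    (hconv : ∀ f : BoundedContinuousFunction ℝ ℝ,
      Filter.Tendsto (fun n => ∫ x, f x ∂(μs n)) Filter.atTop (nhds (∫ x, f x ∂μ))) :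
    QGID l μ := by
  intro p hp
  choose F hFpmf hFeq using fun m => hqgid m p hp
  -- convergence of the Poisson mixtures
  have hqm : ∀ n : ℕ, Filter.Tendsto (fun m => pmix l (μs m) n) Filter.atTop
      (nhds (pmix l μ n)) := by
    intro n
    have hc := hconv (poissonBCF l hl.le n)
    have e1 : (fun m => ∫ x, poissonBCF l hl.le n x ∂(μs m))
        = fun m => pmix l (μs m) n :=
      funext fun m => (pmix_eq_integral_bcf hl (hsupp m) n).symm
    rw [e1, ← pmix_eq_integral_bcf hl hsupp' n] at hc
    exact hc
  -- each F m is bounded by 1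
  have hFle1 : ∀ m n, F m n ≤ 1 := by
    intro m n
    have h := Summable.le_tsum (isPMF_summable (hFpmf m)) n fun j _ => (hFpmf m).1 j
    rw [(hFpmf m).2] at h
    exact h
  -- extract a pointwise convergent subsequence of the F m
  let G : ℕ → (ℕ → Set.Icc (0:ℝ) 1) := fun m n => ⟨F m n, (hFpmf m).1 n, hFle1 m n⟩
  obtain ⟨a, φ, hφ, hGconv⟩ := CompactSpace.tendsto_subseq G
  set f : ℕ → ℝ := fun n => (a n : ℝ) with hfdef
  have hpt : ∀ n, Filter.Tendsto (fun j => F (φ j) n) Filter.atTop (nhds (f n)) := by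
    intro n
    have h1 : Filter.Tendsto (fun j => (G ∘ φ) j n) Filter.atTop (nhds (a n)) :=
      tendsto_pi_nhds.mp hGconv n
    exact (continuous_subtype_val.tendsto (a n)).comp h1
  have hf0 : ∀ n, 0 ≤ f n := fun n => (a n).2.1
  -- partial sums of f are at most 1
  have hsumle : ∀ u : Finset ℕ, ∑ i ∈ u, f i ≤ 1 := by
    intro u
    have h1 : Filter.Tendsto (fun j => ∑ i ∈ u, F (φ j) i) Filter.atTop
        (nhds (∑ i ∈ u, f i)) := tendsto_finset_sum _ fun i _ => hpt i
    refine le_of_tendsto h1 (Filter.Eventually.of_forall fun j => ?_)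
    have h2 := Summable.sum_le_tsum u (fun i _ => (hFpmf (φ j)).1 i) (isPMF_summable (hFpmf (φ j)))
    rw [(hFpmf (φ j)).2] at h2
    exact h2
  have hfsum : Summable f := summable_of_sum_le (fun n => hf0 n) hsumle
  have hfle : ∑' n, f n ≤ 1 := Summable.tsum_le_of_sum_le hfsum hsumle
  -- identify the limit pmf
  have heq : ∀ n, pmix l μ n = geomCompound p f n := by
    intro n
    have h2 : Filter.Tendsto (fun j => geomCompound p (F (φ j)) n) Filter.atTop
        (nhds (pmix l μ n)) := by
      have h3 := (hqm n).comp hφ.tendsto_atTop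
      have e : (fun j => pmix l (μs (φ j)) n) = fun j => geomCompound p (F (φ j)) n :=
        funext fun j => hFeq (φ j) n
      rw [← e]
      exact h3
    have h4 : Filter.Tendsto (fun j => geomCompound p (F (φ j)) n) Filter.atTop
        (nhds (geomCompound p f n)) :=
      tendsto_geomCompound hp (fun j => hFpmf (φ j)) hpt n
    exact tendsto_nhds_unique h2 h4
  -- mass of f is one
  have hmass : ∑' n, geomCompound p f n = 1 := by
    rw [← tsum_congr heq]
    exact tsum_pmix hl hsupp'
  exact ⟨f, ⟨hf0, tsum_eq_one_of_geomCompound hp hf0 hfsum hfle hmass⟩, heq⟩
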